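/- Let A = (A_1,...,A_q) be a family of endomorphisms of an n-dimensional vector space, σ_u its symmetric functions, and T_u the generalized Newton transformation defined by T_0 = I, T_u = σ_u I − Σ_α A_α T_{α♭(u)}. Then tr(T_u) = (n − |u|) σ_u for every multi-index u with |u| ≤ n. -/

import Mathlib

open MvPolynomial Matrix

lemma Derivation.map_finset_prod' {R A : Type*} [CommRing R] [CommRing A] [Algebra R A]
    (D : Derivation R A A) {ι : Type*} [DecidableEq ι] (s : Finset ι) (f : ι → A) :
    D (∏ i ∈ s, f i) = ∑ i ∈ s, (∏ j ∈ s.erase i, f j) * D (f i) := by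
  induction s using Finset.induction with
  | empty => simp
  | @insert a s ha ih =>
    rw [Finset.prod_insert ha, D.leibniz, smul_eq_mul, smul_eq_mul, ih,
      Finset.sum_insert ha, Finset.erase_insert ha]
    rw [Finset.mul_sum]
    rw [add_comm]
    have h2 : ∑ i ∈ s, f a * ((∏ j ∈ s.erase i, f j) * D (f i))
        = ∑ x ∈ s, (∏ j ∈ (insert a s).erase x, f j) * D (f x) := by
      apply Finset.sum_congr rfl
      intro i hi
      rw [Finset.erase_insert_of_ne (ne_of_mem_of_not_mem hi ha).symm,
        Finset.prod_insert (fun h => ha (Finset.mem_of_mem_erase h))]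
      ring
    rw [h2]

lemma Derivation.map_det' {R A : Type*} [CommRing R] [CommRing A] [Algebra R A]
    (D : Derivation R A A) {m : Type*} [Fintype m] [DecidableEq m] (M : Matrix m m A) :
    D M.det = Matrix.trace (M.adjugate * M.map (D ·)) := by
  have key : ∀ i : m, (M.updateCol i (fun k => D (M k i))).det
      = ∑ σ : Equiv.Perm m, Equiv.Perm.sign σ •
          ((∏ j ∈ Finset.univ.erase i, M (σ j) j) * D (M (σ i) i)) := by
    intro i
    rw [Matrix.det_apply]
    apply Finset.sum_congr rfl
    intro σ _
    congr 1
    rw [← Finset.mul_prod_erase _ _ (Finset.mem_univ i)]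
    rw [Matrix.updateCol_self, mul_comm]
    congr 1
    apply Finset.prod_congr rfl
    intro j hj
    rw [Matrix.updateCol_ne (Finset.ne_of_mem_erase hj)]
  have lhs : D M.det = ∑ i : m, (M.updateCol i (fun k => D (M k i))).det := by
    rw [Matrix.det_apply, map_sum]
    have : ∀ σ : Equiv.Perm m, D (Equiv.Perm.sign σ • ∏ j, M (σ j) j)
        = Equiv.Perm.sign σ • D (∏ j, M (σ j) j) := by
      intro σ
      rw [Units.smul_def, Units.smul_def, map_zsmul]
    simp_rw [this, Derivation.map_finset_prod', Finset.smul_sum]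
    rw [Finset.sum_comm]
    apply Finset.sum_congr rfl
    intro i _
    rw [key]
  rw [lhs]
  have : ∀ i : m, (M.updateCol i (fun k => D (M k i))).det
      = ∑ j, M.adjugate i j * D (M j i) := by
    intro i
    rw [← Matrix.cramer_apply, Matrix.cramer_eq_adjugate_mulVec]
    rfl
  simp_rw [this]
  rw [Matrix.trace]
  apply Finset.sum_congr rfl
  intro i _
  rw [Matrix.diag_apply, Matrix.mul_apply]
  simp [Matrix.map_apply]

lemma single_add_sub {q : ℕ} (s : Fin q →₀ ℕ) (α : Fin q) (h : s α ≠ 0) :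
    Finsupp.single α 1 + (s - Finsupp.single α 1) = s := by
  ext β
  simp only [Finsupp.add_apply, Finsupp.tsub_apply, Finsupp.single_apply]
  split_ifs with hb
  · subst hb; omega
  · omega

lemma coeff_X_mul_pderiv {q : ℕ} (α : Fin q) (u : Fin q →₀ ℕ) (p : MvPolynomial (Fin q) ℝ) :
    coeff u (X α * pderiv α p) = (u α : ℝ) * coeff u p := by
  induction p using MvPolynomial.induction_on' with
  | add p₁ p₂ h1 h2 => simp only [map_add, mul_add, coeff_add, h1, h2]
  | monomial s a =>
    rw [pderiv_monomial, coeff_X_mul', coeff_monomial]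
    by_cases hα : α ∈ u.support
    · rw [if_pos hα, coeff_monomial]
      have huα : u α ≠ 0 := by simpa [Finsupp.mem_support_iff] using hα
      by_cases hs : s α = 0
      · have hne : s ≠ u := fun h => huα (h ▸ hs)
        rw [if_neg hne]
        simp [hs]
      · rcases eq_or_ne s u with rfl | hne
        · rw [if_pos rfl, if_pos rfl]; ring
        · rw [if_neg hne, if_neg ?_]
          · simp
          · intro h
            apply hne
            rw [← single_add_sub s α hs, ← single_add_sub u α huα, h]
    · rw [if_neg hα]
      have : u α = 0 := by simpa [Finsupp.mem_support_iff] using hα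
      rw [this, Nat.cast_zero, zero_mul]

noncomputable def Bmat {n q : ℕ} (A : Fin q → Matrix (Fin n) (Fin n) ℝ) :
    Matrix (Fin n) (Fin n) (MvPolynomial (Fin q) ℝ) :=
  1 + ∑ α, (X α : MvPolynomial (Fin q) ℝ) • (A α).map C

lemma Bmat_map_pderiv {n q : ℕ} (A : Fin q → Matrix (Fin n) (Fin n) ℝ) (α : Fin q) :
    (Bmat A).map (⇑(pderiv (R := ℝ) α)) = (A α).map C := by
  ext i j
  simp [Bmat, Matrix.map_apply, Matrix.add_apply, Matrix.sum_apply, Matrix.smul_apply,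
    Matrix.one_apply, smul_eq_mul, Derivation.leibniz, pderiv_X, pderiv_C, Pi.single_apply,
    apply_ite (⇑(pderiv (R := ℝ) α)), mul_comm]

lemma Bmat_map_constantCoeff {n q : ℕ} (A : Fin q → Matrix (Fin n) (Fin n) ℝ) :
    (Bmat A).map (⇑(constantCoeff (σ := Fin q) (R := ℝ))) = 1 := by
  ext i j
  simp [Bmat, Matrix.map_apply, Matrix.add_apply, Matrix.sum_apply, Matrix.smul_apply,
    Matrix.one_apply, smul_eq_mul, apply_ite (⇑(constantCoeff (σ := Fin q) (R := ℝ)))]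

lemma trace_adj_identity {n q : ℕ} (A : Fin q → Matrix (Fin n) (Fin n) ℝ) :
    Matrix.trace (adjugate (Bmat A)) + ∑ α, X α * pderiv α (Bmat A).det
      = (n : MvPolynomial (Fin q) ℝ) * (Bmat A).det := by
  have h : ∀ α, pderiv (R := ℝ) α (Bmat A).det
      = Matrix.trace (adjugate (Bmat A) * (A α).map C) := by
    intro α; rw [Derivation.map_det', Bmat_map_pderiv]
  simp_rw [h]
  have h2 : ∑ α, X α * Matrix.trace (adjugate (Bmat A) * (A α).map C)
      = Matrix.trace (adjugate (Bmat A) *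
          (∑ α, (X α : MvPolynomial (Fin q) ℝ) • (A α).map C)) := by
    rw [Matrix.mul_sum, Matrix.trace_sum]
    apply Finset.sum_congr rfl
    intro α _
    rw [Matrix.mul_smul, Matrix.trace_smul, smul_eq_mul]
  rw [h2]
  have h3 : Matrix.trace (adjugate (Bmat A)) +
      Matrix.trace (adjugate (Bmat A) * (∑ α, (X α : MvPolynomial (Fin q) ℝ) • (A α).map C))
      = Matrix.trace (adjugate (Bmat A) * Bmat A) := by
    rw [Bmat, Matrix.mul_add, Matrix.mul_one, Matrix.trace_add]
  rw [h3, Matrix.adjugate_mul, Matrix.trace_smul, Matrix.trace_one, smul_eq_mul]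
  rw [Fintype.card_fin, mul_comm]

lemma coeff_trace {n q : ℕ} (d : Fin q →₀ ℕ) (M : Matrix (Fin n) (Fin n) (MvPolynomial (Fin q) ℝ)) :
    coeff d (Matrix.trace M) = Matrix.trace (M.map (coeff d)) := by
  rw [Matrix.trace, Matrix.trace, MvPolynomial.coeff_sum]
  rfl

lemma coeff_trace_adj {n q : ℕ} (A : Fin q → Matrix (Fin n) (Fin n) ℝ) (u : Fin q → ℕ) :
    coeff (Finsupp.equivFunOnFinite.symm u) (Matrix.trace (adjugate (Bmat A)))
      = ((n : ℝ) - ((∑ i, u i : ℕ) : ℝ)) *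
          coeff (Finsupp.equivFunOnFinite.symm u) (Bmat A).det := by
  have h := congrArg (coeff (Finsupp.equivFunOnFinite.symm u)) (trace_adj_identity A)
  rw [coeff_add, MvPolynomial.coeff_sum] at h
  have hC : ((n : ℕ) : MvPolynomial (Fin q) ℝ) = C ((n : ℕ) : ℝ) := by
    rw [map_natCast C n]
  rw [hC, coeff_C_mul] at h
  have h2 : ∀ α, coeff (Finsupp.equivFunOnFinite.symm u) (X α * pderiv α (Bmat A).det)
      = (u α : ℝ) * coeff (Finsupp.equivFunOnFinite.symm u) (Bmat A).det := by
    intro α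
    rw [coeff_X_mul_pderiv]
    rfl
  simp_rw [h2] at h
  rw [← Finset.sum_mul] at h
  have h3 : (∑ α, (u α : ℝ)) = ((∑ i, u i : ℕ) : ℝ) := by push_cast; rfl
  rw [h3] at h
  linarith [h]

/-- The generalized symmetric function `σ_u(A)`: the coefficient of `t^u` in
`det(I + t₁A₁ + ⋯ + t_qA_q)`. -/
noncomputable def gsigma {n q : ℕ} (A : Fin q → Matrix (Fin n) (Fin n) ℝ)
    (u : Fin q → ℕ) : ℝ :=
  MvPolynomial.coeff (Finsupp.equivFunOnFinite.symm u)
    ((1 + ∑ α, (MvPolynomial.X α : MvPolynomial (Fin q) ℝ) • (A α).map MvPolynomial.C).det)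

noncomputable def Tc {n q : ℕ} (A : Fin q → Matrix (Fin n) (Fin n) ℝ) (u : Fin q → ℕ) :
    Matrix (Fin n) (Fin n) ℝ :=
  (adjugate (Bmat A)).map (coeff (Finsupp.equivFunOnFinite.symm u))

lemma symm_update {q : ℕ} (u : Fin q → ℕ) (α : Fin q) :
    Finsupp.equivFunOnFinite.symm u - Finsupp.single α 1
      = Finsupp.equivFunOnFinite.symm (Function.update u α (u α - 1)) := by
  ext β
  change (Finsupp.equivFunOnFinite.symm u) β - _ = Function.update u α (u α - 1) β
  rw [show (Finsupp.equivFunOnFinite.symm u) β = u β from rfl, Finsupp.single_apply,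
    Function.update_apply]
  rcases eq_or_ne β α with rfl | h
  · rw [if_pos rfl, if_pos rfl]
  · rw [if_neg (fun hh => h hh.symm), if_neg h, Nat.sub_zero]

lemma Tc_rec {n q : ℕ} (A : Fin q → Matrix (Fin n) (Fin n) ℝ) (u : Fin q → ℕ) :
    Tc A u = gsigma A u • (1 : Matrix (Fin n) (Fin n) ℝ) -
      ∑ α, if 1 ≤ u α then A α * Tc A (Function.update u α (u α - 1)) else 0 := by
  rw [eq_sub_iff_add_eq]
  ext i j
  set d := Finsupp.equivFunOnFinite.symm u with hd
  have hmul := congrArg (fun M => coeff d (M i j)) (Matrix.mul_adjugate (Bmat A))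
  beta_reduce at hmul
  have hBij : ∀ k, Bmat A i k = (if i = k then (1 : MvPolynomial (Fin q) ℝ) else 0)
      + ∑ α, X α * C (A α i k) := by
    intro k
    simp [Bmat, Matrix.add_apply, Matrix.sum_apply, Matrix.smul_apply, Matrix.one_apply,
      smul_eq_mul]
  have hL : (Bmat A * adjugate (Bmat A)) i j
      = adjugate (Bmat A) i j + ∑ α, X α * ∑ k, C (A α i k) * adjugate (Bmat A) k j := by
    rw [Matrix.mul_apply]
    simp_rw [hBij, add_mul, Finset.sum_add_distrib, ite_mul, one_mul, zero_mul,
      Finset.sum_ite_eq, Finset.mem_univ, if_true, Finset.sum_mul, mul_assoc]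
    rw [Finset.sum_comm]
    simp_rw [← Finset.mul_sum]
  rw [hL, coeff_add, MvPolynomial.coeff_sum] at hmul
  have hterm : ∀ α, coeff d (X α * ∑ k, C (A α i k) * adjugate (Bmat A) k j)
      = if 1 ≤ u α then (A α * Tc A (Function.update u α (u α - 1))) i j else 0 := by
    intro α
    rw [coeff_X_mul']
    have hsupp : α ∈ d.support ↔ 1 ≤ u α := by
      rw [Finsupp.mem_support_iff, hd]
      rw [show (Finsupp.equivFunOnFinite.symm u) α = u α from rfl]
      omega
    split_ifs with h1 h2 h2
    · rw [MvPolynomial.coeff_sum, Matrix.mul_apply]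
      apply Finset.sum_congr rfl
      intro k _
      rw [coeff_C_mul, hd, symm_update]
      rfl
    · exact absurd (hsupp.mp h1) h2
    · exact absurd (hsupp.mpr h2) h1
    · rfl
  simp_rw [hterm] at hmul
  have hR : coeff d (((Bmat A).det • (1 : Matrix (Fin n) (Fin n) (MvPolynomial (Fin q) ℝ))) i j)
      = (gsigma A u • (1 : Matrix (Fin n) (Fin n) ℝ)) i j := by
    rw [Matrix.smul_apply, Matrix.smul_apply, Matrix.one_apply, Matrix.one_apply,
      smul_eq_mul, smul_eq_mul]
    split_ifs with h
    · rw [mul_one, mul_one]; rfl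
    · rw [mul_zero, mul_zero, coeff_zero]
  rw [Matrix.add_apply, Matrix.sum_apply]
  have hite : ∀ α, (if 1 ≤ u α then A α * Tc A (Function.update u α (u α - 1)) else 0) i j
      = if 1 ≤ u α then (A α * Tc A (Function.update u α (u α - 1))) i j else 0 := by
    intro α; split_ifs <;> rfl
  simp_rw [hite]
  exact hmul.trans hR

/-- Auxiliary recursion (on `|u|`) for the generalized Newton transformation. -/
noncomputable def newtonAux {n q : ℕ} (A : Fin q → Matrix (Fin n) (Fin n) ℝ) :
    ℕ → (Fin q → ℕ) → Matrix (Fin n) (Fin n) ℝ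
  | 0, _ => 1
  | k + 1, u =>
      gsigma A u • (1 : Matrix (Fin n) (Fin n) ℝ) -
        ∑ α, if 1 ≤ u α then A α * newtonAux A k (Function.update u α (u α - 1)) else 0

/-- The generalized Newton transformation `T_u`, defined by `T_0 = I` and
`T_u = σ_u I - ∑_α A_α T_{α♭(u)}`. -/
noncomputable def newton {n q : ℕ} (A : Fin q → Matrix (Fin n) (Fin n) ℝ)
    (u : Fin q → ℕ) : Matrix (Fin n) (Fin n) ℝ :=
  newtonAux A (∑ i, u i) u

lemma newtonAux_eq_Tc {n q : ℕ} (A : Fin q → Matrix (Fin n) (Fin n) ℝ) :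
    ∀ (k : ℕ) (u : Fin q → ℕ), (∑ i, u i) = k → newtonAux A k u = Tc A u := by
  intro k
  induction k with
  | zero =>
    intro u hk
    have hu : u = fun _ => 0 := by
      funext i
      exact Finset.sum_eq_zero_iff.mp hk i (Finset.mem_univ i)
    subst hu
    have hd : (Finsupp.equivFunOnFinite.symm (fun _ => 0 : Fin q → ℕ)) = 0 := by
      ext β; rfl
    rw [newtonAux, Tc, hd]
    rw [show (coeff (0 : Fin q →₀ ℕ) : MvPolynomial (Fin q) ℝ → ℝ)
        = ⇑(constantCoeff (σ := Fin q) (R := ℝ)) from rfl]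
    rw [show (adjugate (Bmat A)).map ⇑(constantCoeff (σ := Fin q) (R := ℝ))
        = (constantCoeff (σ := Fin q) (R := ℝ)).mapMatrix (adjugate (Bmat A)) from rfl]
    rw [RingHom.map_adjugate, RingHom.mapMatrix_apply, Bmat_map_constantCoeff, adjugate_one]
  | succ k ih =>
    intro u hk
    rw [newtonAux, Tc_rec A u]
    congr 1
    apply Finset.sum_congr rfl
    intro α _
    split_ifs with h
    · congr 1
      apply ih
      rw [Finset.sum_update_of_mem (Finset.mem_univ α)]
      have h2 : u α + ∑ x ∈ Finset.univ.erase α, u x = k + 1 := by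
        rw [Finset.add_sum_erase _ u (Finset.mem_univ α), hk]
      rw [Finset.sdiff_singleton_eq_erase]
      omega
    · rfl

theorem trace_newton {n q : ℕ} (A : Fin q → Matrix (Fin n) (Fin n) ℝ)
    (u : Fin q → ℕ) (hu : ∑ i, u i ≤ n) :
    (newton A u).trace = ((n : ℝ) - ((∑ i, u i : ℕ) : ℝ)) * gsigma A u := by
  rw [newton, newtonAux_eq_Tc A _ u rfl, Tc, ← coeff_trace, coeff_trace_adj]
  rfl
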